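/- For integers 1 ≤ m ≤ d, the inequality (d−1)(m+1)² ≥ 4·m·(d−m) holds, with equality if and only if m = 1 (for d ≥ 1). Consequently the binomial inequality (d−1)·(C(d,m) + d·C(d−1,m−1)) ≥ 4·m·C(d,m+1) holds; i.e., the Type-II secure determinant code parameters for ℓ = 1 satisfy the upper bound F_{s,II} ≤ (d−1)(α + dβ)/4, with equality at the MBR point m = 1. -/

import Mathlib

/-- For `1 ≤ m ≤ d`: `(d−1)(m+1)² ≥ 4m(d−m)`, with equality iff `m = 1`;
consequently `(d−1)·(C(d,m) + d·C(d−1,m−1)) ≥ 4·m·C(d,m+1)`, with equality at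
the MBR point `m = 1`. -/
theorem typeII_tandon_bound_ell_one (d m : ℕ) (hm : 1 ≤ m) (hmd : m ≤ d) :
    ((d - 1) * (m + 1) ^ 2 ≥ 4 * m * (d - m)) ∧
    ((d - 1) * (m + 1) ^ 2 = 4 * m * (d - m) ↔ m = 1) ∧
    ((d - 1) * (Nat.choose d m + d * Nat.choose (d - 1) (m - 1))
        ≥ 4 * m * Nat.choose d (m + 1)) ∧
    (m = 1 → (d - 1) * (Nat.choose d m + d * Nat.choose (d - 1) (m - 1))
        = 4 * m * Nat.choose d (m + 1)) := by
  have hd1 : 1 ≤ d := le_trans hm hmd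
  have h1 : (d - 1) * (m + 1) ^ 2 ≥ 4 * m * (d - m) := by
    zify [hm, hmd, hd1]
    nlinarith [sq_nonneg ((m : ℤ) - 1), sq_nonneg ((m : ℤ) + 1),
      mul_nonneg (sub_nonneg.2 (by exact_mod_cast hmd : (m : ℤ) ≤ d))
        (sq_nonneg ((m : ℤ) - 1))]
  -- key identity: d * C(d-1, m-1) = m * C(d, m)
  have hid1 : d * Nat.choose (d - 1) (m - 1) = Nat.choose d m * m := by
    have h := Nat.add_one_mul_choose_eq (d - 1) (m - 1)
    have e1 : (d - 1).succ = d := by omega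
    have e2 : (m - 1).succ = m := by omega
    rw [Nat.succ_eq_add_one] at e1 e2
    rw [e1, e2] at h
    exact h
  -- key identity: C(d, m+1) * (m+1) = C(d, m) * (d - m)
  have hid2 : Nat.choose d (m + 1) * (m + 1) = Nat.choose d m * (d - m) :=
    Nat.choose_succ_right_eq d m
  have h3 : (d - 1) * (Nat.choose d m + d * Nat.choose (d - 1) (m - 1))
      ≥ 4 * m * Nat.choose d (m + 1) := by
    have hcancel : (4 * m * Nat.choose d (m + 1)) * (m + 1)
        ≤ ((d - 1) * (Nat.choose d m + d * Nat.choose (d - 1) (m - 1))) * (m + 1) := by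
      have hrhs : (4 * m * Nat.choose d (m + 1)) * (m + 1)
          = 4 * m * (d - m) * Nat.choose d m := by
        rw [mul_assoc, hid2]; ring
      have hlhs : ((d - 1) * (Nat.choose d m + d * Nat.choose (d - 1) (m - 1))) * (m + 1)
          = (d - 1) * (m + 1) ^ 2 * Nat.choose d m := by
        rw [hid1]; ring
      rw [hrhs, hlhs]
      exact Nat.mul_le_mul_right _ h1
    exact Nat.le_of_mul_le_mul_right hcancel (by omega)
  refine ⟨h1, ⟨fun h => ?_, fun h => ?_⟩, h3, fun h => ?_⟩
  · by_contra hne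
    have hm2 : 2 ≤ m := by omega
    have : (d - 1) * (m + 1) ^ 2 > 4 * m * (d - m) := by
      zify [hm, hmd, hd1]
      have hdm : (m : ℤ) ≤ d := by exact_mod_cast hmd
      have hm2' : (2 : ℤ) ≤ m := by exact_mod_cast hm2
      nlinarith [mul_nonneg (sub_nonneg.2 hdm) (sq_nonneg ((m : ℤ) - 1))]
    omega
  · subst h
    zify [hmd, hd1]
    ring
  · subst h
    simp only [Nat.choose_one_right, Nat.sub_self, Nat.choose_zero_right] at *
    have : Nat.choose d 2 * 2 = Nat.choose d 1 * (d - 1) := Nat.choose_succ_right_eq d 1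
    rw [Nat.choose_one_right] at this
    calc (d - 1) * (d + d * 1) = 2 * (d * (d - 1)) := by ring
      _ = 2 * (Nat.choose d 2 * 2) := by rw [this]
      _ = 4 * 1 * Nat.choose d 2 := by ring
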